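/- Let R = F[U,V] with F = Z/2Z, and let C be a reduced finitely generated free bigraded chain complex over R with ∂² = 0, such that H_*(C/(U=0)) and H_*(C/(V=0)) are annihilated by V and U respectively (torsion order 1), after splitting off one free F[U,V] summand. Suppose x₁ is a basis element of maximal Alexander grading with ∂_V x₁ ≠ 0 where ∂_V is the induced differential on C/(U=0). Then after a change of basis, there exists a basis element x₂ with ∂_V x₁ = V x₂. -/

import Mathlib

/- STATEMENT 14: A step in the proof of Proposition 3.6.  Let `R = F[U,V]` (`F = ℤ/2ℤ`)
and let `C = ι → R` be a reduced finitely generated free bigraded chain complex with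
standard basis `{e i}`, Alexander gradings `A : ι → ℤ` (multiplication by `U` lowers the
grading by 1, by `V` raises it by 1, and `∂` preserves it), and `∂² = 0`, such that the
homologies `H_*(C/(U=0))` and `H_*(C/(V=0))` are annihilated by `V` and `U` respectively
(torsion order 1, after splitting off one free `F[U,V]` summand).  If `x₁ = e i₁` is a
basis element of maximal Alexander grading with `∂_V x₁ ≠ 0` (where `∂_V` is the induced
differential on `C/(U=0)`), then after a change of basis there is a basis element `x₂`
with `∂_V x₁ = V x₂`. -/

noncomputable abbrev R2 : Type := MvPolynomial (Fin 2) (ZMod 2)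
noncomputable abbrev UU : R2 := MvPolynomial.X 0
noncomputable abbrev VV : R2 := MvPolynomial.X 1
noncomputable abbrev SP : Type := Polynomial (ZMod 2)

/-- Setting `U = 0`, `V = X`. -/
noncomputable def piV : R2 →+* SP :=
  (MvPolynomial.aeval ![(0 : SP), Polynomial.X]).toRingHom

/-- Setting `U = X`, `V = 0`. -/
noncomputable def piU : R2 →+* SP :=
  (MvPolynomial.aeval ![(Polynomial.X : SP), (0 : SP)]).toRingHom

/-- Standard basis of the free module `ι → R`. -/
noncomputable def e {ι : Type*} [DecidableEq ι] (i : ι) : ι → R2 := Pi.single i 1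

/-- The induced differential `∂_V` on `C/(U=0)`, as a map on the free `F[V]`-module
`ι → F[V]` (obtained by applying `piV` entrywise to the matrix of `∂`). -/
noncomputable def dV {ι : Type*} [Fintype ι] [DecidableEq ι]
    (D : (ι → R2) →ₗ[R2] (ι → R2)) : (ι → SP) →ₗ[SP] (ι → SP) :=
  Matrix.toLin' ((Matrix.of fun i j : ι => D (e j) i).map piV)

/-- The induced differential `∂_U` on `C/(V=0)`. -/
noncomputable def dU {ι : Type*} [Fintype ι] [DecidableEq ι]
    (D : (ι → R2) →ₗ[R2] (ι → R2)) : (ι → SP) →ₗ[SP] (ι → SP) :=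
  Matrix.toLin' ((Matrix.of fun i j : ι => D (e j) i).map piU)

lemma piV_coeff (p : R2) (l : ℕ) :
    (piV p).coeff l = MvPolynomial.coeff (Finsupp.single (1 : Fin 2) l) p := by
  induction p using MvPolynomial.induction_on' with
  | add p q hp hq => simp [map_add, hp, hq]
  | monomial m c =>
    show ((MvPolynomial.aeval ![(0:SP), Polynomial.X]) ((MvPolynomial.monomial m) c)).coeff l = _
    rw [MvPolynomial.aeval_monomial, Finsupp.prod_fintype _ _ (fun i => pow_zero _),
      Fin.prod_univ_two, MvPolynomial.coeff_monomial]
    simp only [Matrix.cons_val_zero, Matrix.cons_val_one, Matrix.head_cons]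
    by_cases h0 : m 0 = 0
    · rw [h0, pow_zero, one_mul]
      have halg : (algebraMap (ZMod 2) SP) c = Polynomial.C c := rfl
      rw [halg, Polynomial.coeff_C_mul, Polynomial.coeff_X_pow]
      by_cases h1 : m 1 = l
      · have hm : m = Finsupp.single 1 l := by
          ext a; fin_cases a
          · simpa using h0
          · simpa using h1
        simp [hm, h1]
      · have hm : m ≠ Finsupp.single 1 l := fun h => h1 (by rw [h]; simp)
        simp [hm, show ¬ l = m 1 from fun h => h1 h.symm]
    · rw [zero_pow h0]
      have hm : m ≠ Finsupp.single 1 l := by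
        intro h; apply h0; rw [h]
        simp [Finsupp.single_apply]
      simp [hm]

lemma SP_add_self (p : SP) : p + p = 0 := by
  have h2 : (2 : SP) = 0 := by
    rw [← one_add_one_eq_two, show (1 : SP) = Polynomial.C 1 from (Polynomial.C_1).symm,
      ← Polynomial.C_add, show (1 + 1 : ZMod 2) = 0 from by decide, Polynomial.C_0]
  calc p + p = 2 * p := by ring
  _ = 0 := by rw [h2, zero_mul]

lemma ZMod2_ne (a : ZMod 2) (h : a ≠ 0) : a = 1 := by revert h; revert a; decide

theorem basis_change_for_dV
    {ι : Type*} [Fintype ι] [DecidableEq ι]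
    (D : (ι → R2) →ₗ[R2] (ι → R2)) (hD2 : D.comp D = 0)
    (hreduced : ∀ i : ι, D (e i) ∈
      LinearMap.range (LinearMap.lsmul R2 (ι → R2) UU) ⊔
      LinearMap.range (LinearMap.lsmul R2 (ι → R2) VV))
    (A : ι → ℤ)
    (hgrade : ∀ (i j : ι) (k l : ℕ),
      MvPolynomial.coeff (Finsupp.single (0 : Fin 2) k + Finsupp.single (1 : Fin 2) l)
        (D (e i) j) ≠ 0 → A j - (k : ℤ) + (l : ℤ) = A i)
    (hannV : ∀ z : ι → SP, dV D z = 0 →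
      (Polynomial.X : SP) • z ∈ LinearMap.range (dV D))
    (hannU : ∀ z : ι → SP, dU D z = 0 →
      (Polynomial.X : SP) • z ∈ LinearMap.range (dU D))
    (i1 : ι) (hmax : ∀ i : ι, A i ≤ A i1)
    (hne : dV D (Pi.single i1 1) ≠ 0) :
    ∃ (b' : Module.Basis ι SP (ι → SP)) (i2 : ι),
      b' i1 = Pi.single i1 1 ∧
      dV D (Pi.single i1 1) = (Polynomial.X : SP) • b' i2 := by
  classical
  -- basic formula for dV
  have hdV : ∀ (x : ι → SP) (i : ι), dV D x i = ∑ j, piV (D (e j) i) * x j := by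
    intro x i
    rw [dV, Matrix.toLin'_apply]
    rfl
  -- constant coefficients vanish (reducedness)
  have hconst : ∀ i j : ι, MvPolynomial.coeff 0 (D (e i) j) = 0 := by
    intro i j
    obtain ⟨u, hu, v, hv, huv⟩ := Submodule.mem_sup.mp (hreduced i)
    obtain ⟨a, ha⟩ := hu
    obtain ⟨b, hb⟩ := hv
    have hDe : D (e i) j = UU * a j + VV * b j := by
      rw [← huv, ← ha, ← hb]
      simp [LinearMap.lsmul_apply, smul_eq_mul]
    rw [hDe, MvPolynomial.coeff_add]
    have hcc : ∀ (q : R2) (s : Fin 2), MvPolynomial.coeff 0 (MvPolynomial.X s * q) = 0 := by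
      intro q s
      have : MvPolynomial.constantCoeff (MvPolynomial.X s * q) = 0 := by
        rw [map_mul, MvPolynomial.constantCoeff_X, zero_mul]
      simpa [MvPolynomial.constantCoeff_eq] using this
    rw [hcc, hcc, add_zero]
  -- row i1 of the matrix of dV vanishes (maximality of A i1)
  have hpirow : ∀ j : ι, piV (D (e j) i1) = 0 := by
    intro j
    apply Polynomial.ext
    intro l
    rw [Polynomial.coeff_zero, piV_coeff]
    by_contra hc
    rcases Nat.eq_zero_or_pos l with hl | hl
    · subst hl
      exact hc (by simpa using hconst j i1)
    · have hg := hgrade j i1 0 l (by simpa using hc)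
      have hle := hmax j
      push_cast at hg
      omega
  have hrowx : ∀ x : ι → SP, dV D x i1 = 0 := by
    intro x
    rw [hdV]
    exact Finset.sum_eq_zero fun j _ => by rw [hpirow j, zero_mul]
  -- dV ∘ dV = 0
  have hcomp : ∀ x : ι → SP, dV D (dV D x) = 0 := by
    intro x
    have h1 : (Matrix.of fun i j : ι => D (e j) i) = LinearMap.toMatrix' D := by
      ext i j
      rw [LinearMap.toMatrix'_apply, Matrix.of_apply]
      have he : e j = fun j' => if j' = j then (1 : R2) else 0 := by
        funext j'
        simp [e, Pi.single_apply]
      rfl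
    have h2 : dV D ∘ₗ dV D = 0 := by
      rw [dV, ← Matrix.toLin'_mul, ← Matrix.map_mul, h1, ← LinearMap.toMatrix'_comp,
        show D ∘ₗ D = 0 from hD2]
      have h0 : LinearMap.toMatrix' (0 : (ι → R2) →ₗ[R2] (ι → R2)) = 0 := by
        ext i j
        simp [LinearMap.toMatrix'_apply]
      rw [h0]
      have h0' : ((0 : Matrix ι ι R2).map ⇑piV) = 0 := by
        ext i j
        simp [Matrix.map_apply]
      rw [h0']
      apply LinearMap.ext
      intro x
      funext i
      rw [LinearMap.zero_apply, Pi.zero_apply, Matrix.toLin'_apply]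
      simp [Matrix.mulVec, dotProduct]
    simpa using LinearMap.congr_fun h2 x
  -- torsion-freeness
  have hTF : ∀ w : ι → SP, (Polynomial.X : SP) • w = 0 → w = 0 := by
    intro w h
    funext j
    have hj := congrFun h j
    simp only [Pi.smul_apply, smul_eq_mul, Pi.zero_apply] at hj
    exact (mul_eq_zero.mp hj).resolve_left Polynomial.X_ne_zero
  -- v = dV x₁ and its entries
  set v : ι → SP := dV D (Pi.single i1 1) with hv
  have hvj : ∀ j : ι, v j = piV (D (e i1) j) := by
    intro j
    rw [hv, hdV]
    rw [Finset.sum_eq_single i1]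
    · simp
    · intro k _ hk
      simp [Pi.single_apply, hk]
    · simp
  have hXdvd : ∀ j : ι, (Polynomial.X : SP) ∣ v j := by
    intro j
    rw [Polynomial.X_dvd_iff, hvj, piV_coeff]
    simpa using hconst i1 j
  choose y hy using hXdvd
  have hvy : v = (Polynomial.X : SP) • y := by
    funext j
    rw [Pi.smul_apply, smul_eq_mul, hy j]
  have hvi1 : v i1 = 0 := hrowx _
  have hdVv : dV D v = 0 := hcomp _
  have hdVy : dV D y = 0 := by
    apply hTF
    rw [← map_smul, ← hvy, hdVv]
  by_cases hex : ∃ j, (y j).coeff 0 ≠ 0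
  · -- good case: build a new basis
    obtain ⟨j0, hj0⟩ := hex
    -- grading at j0
    have hc1 : (v j0).coeff 1 ≠ 0 := by
      rw [hy j0]
      simpa [Polynomial.coeff_X_mul] using hj0
    have hg1 : A j0 + 1 = A i1 := by
      have := hgrade i1 j0 0 1 (by
        rw [hvj j0, piV_coeff] at hc1
        simpa using hc1)
      push_cast at this
      omega
    have hy0 : ∀ l : ℕ, l ≠ 0 → (y j0).coeff l = 0 := by
      intro l hl
      by_contra hc
      have hcl : (v j0).coeff (l + 1) ≠ 0 := by
        rw [hy j0]
        simpa [Polynomial.coeff_X_mul] using hc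
      have := hgrade i1 j0 0 (l + 1) (by
        rw [hvj j0, piV_coeff] at hcl
        simpa using hcl)
      push_cast at this
      omega
    have hyone : y j0 = 1 := by
      apply Polynomial.ext
      intro n
      rcases Nat.eq_zero_or_pos n with hn | hn
      · subst hn
        simp [ZMod2_ne _ hj0]
      · rw [hy0 n (by omega)]
        simp [Polynomial.coeff_one, Nat.pos_iff_ne_zero.mp hn]
    have hyi1 : y i1 = 0 := by
      have : (Polynomial.X : SP) * y i1 = 0 := by rw [← hy i1, hvi1]
      exact (mul_eq_zero.mp this).resolve_left Polynomial.X_ne_zero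
    have hne' : i1 ≠ j0 := by
      intro h
      rw [h, hyone] at hyi1
      exact one_ne_zero hyi1
    -- the change of basis
    set w : ι → SP := y - Pi.single j0 1 with hw
    set φ : (ι → SP) →ₗ[SP] (ι → SP) :=
      LinearMap.id + LinearMap.smulRight (LinearMap.proj j0) w with hφ
    have hφap : ∀ z : ι → SP, φ z = z + z j0 • w := by
      intro z
      simp [hφ]
    have hwj0 : w j0 = 0 := by
      rw [hw]
      simp [hyone]
    have hφj0 : ∀ z : ι → SP, (φ z) j0 = z j0 := by
      intro z
      rw [hφap]
      simp [hwj0]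
    have hφφ : ∀ z : ι → SP, φ (φ z) = z := by
      intro z
      rw [hφap, hφap z, Pi.add_apply, Pi.smul_apply, hwj0, smul_zero, add_zero, add_assoc]
      have : z j0 • w + z j0 • w = 0 := by
        funext k
        simp only [Pi.add_apply, Pi.smul_apply, Pi.zero_apply]
        exact SP_add_self _
      rw [this, add_zero]
    set eqv : (ι → SP) ≃ₗ[SP] (ι → SP) :=
      LinearEquiv.ofLinear φ φ (LinearMap.ext hφφ) (LinearMap.ext hφφ) with heqv
    refine ⟨(Pi.basisFun SP ι).map eqv, j0, ?_, ?_⟩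
    · rw [Module.Basis.map_apply, Pi.basisFun_apply]
      show φ _ = _
      rw [hφap]
      rw [Pi.single_eq_of_ne (Ne.symm hne'), zero_smul, add_zero]
    · rw [Module.Basis.map_apply, Pi.basisFun_apply]
      show v = (Polynomial.X : SP) • φ _
      rw [hφap, Pi.single_eq_same, one_smul, hw]
      have hsimp : Pi.single j0 (1 : SP) + (y - Pi.single j0 1) = y := by abel
      rw [hsimp]
      exact hvy
  · -- impossible case
    exfalso
    push_neg at hex
    have hXy : ∀ j, (Polynomial.X : SP) ∣ y j := fun j => Polynomial.X_dvd_iff.mpr (hex j)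
    choose z hz using hXy
    have hyz : y = (Polynomial.X : SP) • z := by
      funext j
      rw [Pi.smul_apply, smul_eq_mul, hz j]
    have hdVz : dV D z = 0 := by
      apply hTF
      rw [← map_smul, ← hyz, hdVy]
    obtain ⟨w, hw⟩ := hannV z hdVz
    have hdvw : dV D (Pi.single i1 1 + (Polynomial.X : SP) • w) = 0 := by
      rw [map_add, map_smul, hw, ← hyz, ← hv, hvy]
      funext k
      simp only [Pi.add_apply, Pi.zero_apply]
      exact SP_add_self _
    obtain ⟨u, hu⟩ := hannV _ hdvw
    have h0 : (0 : SP) = Polynomial.X * (1 + Polynomial.X * w i1) := by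
      have h1 := congrFun hu i1
      rw [hrowx u] at h1
      rw [h1]
      simp only [Pi.smul_apply, Pi.add_apply, smul_eq_mul, Pi.single_eq_same]
    have h2 : (1 : SP) + Polynomial.X * w i1 = 0 :=
      ((mul_eq_zero.mp h0.symm).resolve_left Polynomial.X_ne_zero)
    have h3 := congrArg (fun p : SP => p.coeff 0) h2
    simp [Polynomial.mul_coeff_zero] at h3
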